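/- arXiv:2205.15921 — 2 statements merged into one kernel-verified Lean document; each statement's English description precedes it below -/
import Mathlib

section
/- For any two distinct indices j ≠ j' and 0 < δ ≤ 1/d, the q=1/2 beta-divergence between the δ-smoothed one-hot vectors satisfies D_{1/2}(e_j^δ, e_{j'}^δ) = 2(1 - δd)(1/√δ - 1/√(1 - (d-1)δ)) ≤ 2/√δ, where e_i^δ = (1 - δd) e_i + δ·1. -/
/-- The δ-smoothed one-hot vector `e_i^δ`, with i-th coordinate `1-(d-1)δ` and others `δ`. -/
noncomputable def smoothedOneHot (d : ℕ) (δ : ℝ) (i : Fin d) : Fin d → ℝ :=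
  fun k => if k = i then 1 - (d - 1) * δ else δ

/-- Beta-divergence with parameter q = 1/2. -/
noncomputable def betaDivHalf {d : ℕ} (x y : Fin d → ℝ) : ℝ :=
  2 * ∑ i, (-2 * Real.sqrt (x i) + Real.sqrt (y i) + x i / Real.sqrt (y i))

theorem betaDivHalf_smoothedOneHot_eq_and_le
    (d : ℕ) (hd : 2 ≤ d) (δ : ℝ) (hδ0 : 0 < δ) (hδ1 : δ ≤ 1 / d)
    (j j' : Fin d) (hjj : j ≠ j') :
    betaDivHalf (smoothedOneHot d δ j) (smoothedOneHot d δ j')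
        = 2 * (1 - δ * d) * (1 / Real.sqrt δ - 1 / Real.sqrt (1 - (d - 1) * δ)) ∧
      2 * (1 - δ * d) * (1 / Real.sqrt δ - 1 / Real.sqrt (1 - (d - 1) * δ))
        ≤ 2 / Real.sqrt δ := by
  have hdpos : (0:ℝ) < d := by positivity
  have hdδ : δ * d ≤ 1 := by
    rw [le_div_iff₀ hdpos] at hδ1; linarith
  set a : ℝ := 1 - (d - 1) * δ with ha
  have haδ : δ ≤ a := by nlinarith
  have hapos : 0 < a := lt_of_lt_of_le hδ0 haδ
  have hsδ : 0 < Real.sqrt δ := Real.sqrt_pos.2 hδ0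
  have hsa : 0 < Real.sqrt a := Real.sqrt_pos.2 hapos
  have hsδ2 : Real.sqrt δ ^ 2 = δ := Real.sq_sqrt hδ0.le
  have hsa2 : Real.sqrt a ^ 2 = a := Real.sq_sqrt hapos.le
  set A : ℝ := -2 * Real.sqrt a + Real.sqrt δ + a / Real.sqrt δ with hA
  set B : ℝ := -2 * Real.sqrt δ + Real.sqrt a + δ / Real.sqrt a with hB
  have hsum : betaDivHalf (smoothedOneHot d δ j) (smoothedOneHot d δ j')
      = 2 * (A + B) := by
    unfold betaDivHalf smoothedOneHot
    congr 1
    have key : ∀ i : Fin d,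
        (-2 * Real.sqrt (if i = j then a else δ) + Real.sqrt (if i = j' then a else δ)
          + (if i = j then a else δ) / Real.sqrt (if i = j' then a else δ))
        = (if i = j then A else 0) + (if i = j' then B else 0) := by
      intro i
      by_cases h1 : i = j
      · subst h1
        simp only [if_pos rfl, if_true, if_neg hjj, add_zero]
        exact hA.symm
      · by_cases h2 : i = j'
        · subst h2
          simp only [if_neg h1, if_pos rfl, if_true, zero_add]
          exact hB.symm
        · simp only [if_neg h1, if_neg h2, add_zero]
          rw [Real.div_sqrt]; ring
    rw [← ha]
    simp only [key, Finset.sum_add_distrib, Finset.sum_ite_eq', Finset.mem_univ,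
      if_true]
  have heq : 2 * (A + B) = 2 * (1 - δ * d) * (1 / Real.sqrt δ - 1 / Real.sqrt a) := by
    have key : ∀ s t : ℝ, 0 < s → 0 < t →
        2 * ((-2 * t + s + t ^ 2 / s) + (-2 * s + t + s ^ 2 / t))
          = 2 * (t ^ 2 - s ^ 2) * (1 / s - 1 / t) := by
      intro s t hs ht
      field_simp
      ring
    have h2 := key (Real.sqrt δ) (Real.sqrt a) hsδ hsa
    rw [hsδ2, hsa2] at h2
    have h3 : (1:ℝ) - δ * d = a - δ := by rw [ha]; ring
    rw [hA, hB, h3]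
    exact h2
  refine ⟨hsum.trans heq, ?_⟩
  rw [← heq]
  have h1 : 1 / Real.sqrt δ - 1 / Real.sqrt a ≤ 1 / Real.sqrt δ := by
    have : 0 < 1 / Real.sqrt a := by positivity
    linarith
  have h2 : 0 ≤ 1 / Real.sqrt δ - 1 / Real.sqrt a := by
    have : 1 / Real.sqrt a ≤ 1 / Real.sqrt δ := by
      apply one_div_le_one_div_of_le hsδ (Real.sqrt_le_sqrt haδ)
    linarith
  rw [heq]
  have h3 : 0 ≤ 1 - δ * d := by linarith
  have h4 : 1 - δ * d ≤ 1 := by nlinarith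
  calc 2 * (1 - δ * d) * (1 / Real.sqrt δ - 1 / Real.sqrt a)
      ≤ 2 * 1 * (1 / Real.sqrt δ) := by
        apply mul_le_mul (by linarith) h1 h2 (by norm_num)
    _ = 2 / Real.sqrt δ := by ring
end

section
/- For any probability vector ψ on d elements, the function δ ↦ H_{1/2}((1-δd)ψ + δ·𝟙) - H_{1/2}((1-δd)e_1 + δ·𝟙) is nonincreasing in δ on [0, 1/d]; consequently, for all δ ∈ [0, 1/d], H_{1/2}((1-δd)ψ + δ·𝟙) - H_{1/2}((1-δd)e_1 + δ·𝟙) ≤ H_{1/2}(ψ). -/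
/-- If `k1*(x-y) = k2*(z-w) ≥ 0` and `√z+√w ≤ √x+√y`, then `k1*(√x-√y) ≤ k2*(√z-√w)`. -/
lemma sqrt_pair_le_pos (k1 k2 x y z w : ℝ) (hx : 0 ≤ x) (hy : 0 ≤ y) (hz : 0 ≤ z) (hw : 0 ≤ w)
    (heq : k1 * (x - y) = k2 * (z - w)) (hpos : 0 ≤ k1 * (x - y))
    (hden : Real.sqrt z + Real.sqrt w ≤ Real.sqrt x + Real.sqrt y) :
    k1 * (Real.sqrt x - Real.sqrt y) ≤ k2 * (Real.sqrt z - Real.sqrt w) := by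
  set a := Real.sqrt x with ha_def
  set b := Real.sqrt y with hb_def
  set c := Real.sqrt z with hc_def
  set e := Real.sqrt w with he_def
  have ha : 0 ≤ a := Real.sqrt_nonneg x
  have hb : 0 ≤ b := Real.sqrt_nonneg y
  have hc : 0 ≤ c := Real.sqrt_nonneg z
  have he : 0 ≤ e := Real.sqrt_nonneg w
  have ha2 : a ^ 2 = x := Real.sq_sqrt hx
  have hb2 : b ^ 2 = y := Real.sq_sqrt hy
  have hc2 : c ^ 2 = z := Real.sq_sqrt hz
  have he2 : e ^ 2 = w := Real.sq_sqrt hw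
  have hR : 0 ≤ k2 * (c - e) := by
    by_cases hce : c + e = 0
    · have hc0 : c = 0 := by linarith
      have he0 : e = 0 := by linarith
      rw [hc0, he0]; simp
    · have hce' : 0 < c + e := lt_of_le_of_ne (add_nonneg hc he) (Ne.symm hce)
      have hid : k2 * (c - e) * (c + e) = k1 * (x - y) := by
        linear_combination k2 * hc2 - k2 * he2 - heq
      nlinarith [hpos, hid, hce']
  by_cases h0 : a + b = 0
  · have hc0 : c = 0 := by linarith
    have he0 : e = 0 := by linarith
    have ha0 : a = 0 := by linarith
    have hb0 : b = 0 := by linarith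
    rw [ha0, hb0, hc0, he0]; simp
  · have hab : 0 < a + b := lt_of_le_of_ne (add_nonneg ha hb) (Ne.symm h0)
    have key : (k1 * (a - b)) * (a + b) = (k2 * (c - e)) * (c + e) := by
      linear_combination heq + k1 * ha2 - k1 * hb2 - k2 * hc2 + k2 * he2
    have step : (k1 * (a - b)) * (a + b) ≤ (k2 * (c - e)) * (a + b) := by
      rw [key]
      exact mul_le_mul_of_nonneg_left hden hR
    exact le_of_mul_le_mul_right step hab

/-- If `k1*(x-y) = k2*(z-w) ≤ 0` and `√x+√y ≤ √z+√w`, then `k1*(√x-√y) ≤ k2*(√z-√w)`. -/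
lemma sqrt_pair_le_neg (k1 k2 x y z w : ℝ) (hx : 0 ≤ x) (hy : 0 ≤ y) (hz : 0 ≤ z) (hw : 0 ≤ w)
    (heq : k1 * (x - y) = k2 * (z - w)) (hneg : k1 * (x - y) ≤ 0)
    (hden : Real.sqrt x + Real.sqrt y ≤ Real.sqrt z + Real.sqrt w) :
    k1 * (Real.sqrt x - Real.sqrt y) ≤ k2 * (Real.sqrt z - Real.sqrt w) := by
  set a := Real.sqrt x with ha_def
  set b := Real.sqrt y with hb_def
  set c := Real.sqrt z with hc_def
  set e := Real.sqrt w with he_def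
  have ha : 0 ≤ a := Real.sqrt_nonneg x
  have hb : 0 ≤ b := Real.sqrt_nonneg y
  have hc : 0 ≤ c := Real.sqrt_nonneg z
  have he : 0 ≤ e := Real.sqrt_nonneg w
  have ha2 : a ^ 2 = x := Real.sq_sqrt hx
  have hb2 : b ^ 2 = y := Real.sq_sqrt hy
  have hc2 : c ^ 2 = z := Real.sq_sqrt hz
  have he2 : e ^ 2 = w := Real.sq_sqrt hw
  have hL : k1 * (a - b) ≤ 0 := by
    by_cases hab : a + b = 0
    · have ha0 : a = 0 := by linarith
      have hb0 : b = 0 := by linarith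
      rw [ha0, hb0]; simp
    · have hab' : 0 < a + b := lt_of_le_of_ne (add_nonneg ha hb) (Ne.symm hab)
      have hid : k1 * (a - b) * (a + b) = k1 * (x - y) := by
        linear_combination k1 * ha2 - k1 * hb2
      nlinarith [hneg, hid, hab']
  by_cases h0 : c + e = 0
  · have hc0 : c = 0 := by linarith
    have he0 : e = 0 := by linarith
    have ha0 : a = 0 := by linarith
    have hb0 : b = 0 := by linarith
    rw [ha0, hb0, hc0, he0]; simp
  · have hce : 0 < c + e := lt_of_le_of_ne (add_nonneg hc he) (Ne.symm h0)
    have key : (k1 * (a - b)) * (a + b) = (k2 * (c - e)) * (c + e) := by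
      linear_combination heq + k1 * ha2 - k1 * hb2 - k2 * hc2 + k2 * he2
    have step : (k1 * (a - b)) * (c + e) ≤ (k2 * (c - e)) * (c + e) := by
      rw [← key]
      exact mul_le_mul_of_nonpos_left hden hL
    exact le_of_mul_le_mul_right step hce

lemma chord_ineq (d : ℕ) (hd : 2 ≤ d) (p δ1 δ2 : ℝ) (hp0 : 0 ≤ p) (hp1 : p ≤ 1)
    (h10 : 0 ≤ δ1) (h12 : δ1 ≤ δ2) (h2d : δ2 * d ≤ 1) :
    Real.sqrt ((1 - δ2 * d) * p + δ2) - Real.sqrt ((1 - δ1 * d) * p + δ1)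
      ≤ p * (Real.sqrt (1 - δ2 * d + δ2) - Real.sqrt (1 - δ1 * d + δ1))
        + (1 - p) * (Real.sqrt δ2 - Real.sqrt δ1) := by
  have hdR : (2 : ℝ) ≤ (d : ℝ) := by exact_mod_cast hd
  have h20 : 0 ≤ δ2 := le_trans h10 h12
  have h1d : δ1 * d ≤ δ2 * d := by
    apply mul_le_mul_of_nonneg_right h12; positivity
  have hc2 : 0 ≤ 1 - δ2 * d := by linarith
  have hc1 : 0 ≤ 1 - δ1 * d := by linarith
  set A2 := (1 - δ2 * d) * p + δ2 with hA2
  set A1 := (1 - δ1 * d) * p + δ1 with hA1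
  set B2 := 1 - δ2 * d + δ2 with hB2
  set B1 := 1 - δ1 * d + δ1 with hB1
  have hA2ge : δ2 ≤ A2 := by nlinarith [mul_nonneg hc2 hp0]
  have hA1ge : δ1 ≤ A1 := by nlinarith [mul_nonneg hc1 hp0]
  have hA2le : A2 ≤ B2 := by nlinarith [mul_nonneg hc2 (sub_nonneg.2 hp1)]
  have hA1le : A1 ≤ B1 := by nlinarith [mul_nonneg hc1 (sub_nonneg.2 hp1)]
  have hB2ge : δ2 ≤ B2 := by simp only [hB2]; linarith
  have hB1ge : δ1 ≤ B1 := by simp only [hB1]; linarith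
  have hA20 : 0 ≤ A2 := le_trans h20 hA2ge
  have hA10 : 0 ≤ A1 := le_trans h10 hA1ge
  have hB20 : 0 ≤ B2 := le_trans h20 hB2ge
  have hB10 : 0 ≤ B1 := le_trans h10 hB1ge
  have hΔ : 0 ≤ δ2 - δ1 := sub_nonneg.2 h12
  -- common step: √B1 - √B2 ≤ (d-1)(√δ2-√δ1)
  have h2 : Real.sqrt B1 - Real.sqrt B2 ≤ ((d : ℝ) - 1) * (Real.sqrt δ2 - Real.sqrt δ1) := by
    have := sqrt_pair_le_pos 1 ((d : ℝ) - 1) B1 B2 δ2 δ1 hB10 hB20 h20 h10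
      (by simp only [hB1, hB2]; ring)
      (by simp only [hB1, hB2]; nlinarith [mul_nonneg hΔ (by linarith : (0:ℝ) ≤ (d:ℝ) - 1)])
      (by
        have e1 : Real.sqrt δ2 ≤ Real.sqrt B2 := Real.sqrt_le_sqrt hB2ge
        have e2 : Real.sqrt δ1 ≤ Real.sqrt B1 := Real.sqrt_le_sqrt hB1ge
        linarith)
    linarith [this]
  rcases le_or_gt (p * d) 1 with hcase | hcase
  · -- p*d ≤ 1
    have h1 : Real.sqrt A2 - Real.sqrt A1 ≤ (1 - p * d) * (Real.sqrt δ2 - Real.sqrt δ1) := by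
      have := sqrt_pair_le_pos 1 (1 - p * d) A2 A1 δ2 δ1 hA20 hA10 h20 h10
        (by simp only [hA1, hA2]; ring)
        (by simp only [hA1, hA2]; nlinarith [mul_nonneg hΔ (by linarith : (0:ℝ) ≤ 1 - p * d)])
        (by
          have e1 : Real.sqrt δ2 ≤ Real.sqrt A2 := Real.sqrt_le_sqrt hA2ge
          have e2 : Real.sqrt δ1 ≤ Real.sqrt A1 := Real.sqrt_le_sqrt hA1ge
          linarith)
      linarith [this]
    have h3 : 0 ≤ p * ((Real.sqrt B2 - Real.sqrt B1) + ((d:ℝ) - 1) * (Real.sqrt δ2 - Real.sqrt δ1)) :=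
      mul_nonneg hp0 (by linarith)
    linarith [h1, h3]
  · -- 1 < p*d
    have heqA : ((d:ℝ) - 1) * (A2 - A1) = (p * d - 1) * (B2 - B1) := by
      simp only [hA1, hA2, hB1, hB2]; ring
    have hnegA : ((d:ℝ) - 1) * (A2 - A1) ≤ 0 := by
      have haux1 : (0:ℝ) ≤ (d:ℝ) - 1 := by linarith
      have haux2 : (0:ℝ) ≤ p * d - 1 := by linarith
      have haux : 0 ≤ (δ2 - δ1) * ((d:ℝ) - 1) * (p * d - 1) :=
        mul_nonneg (mul_nonneg hΔ haux1) haux2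
      simp only [hA1, hA2]
      linarith [haux]
    have hdenA : Real.sqrt A2 + Real.sqrt A1 ≤ Real.sqrt B2 + Real.sqrt B1 := by
      have e1 : Real.sqrt A2 ≤ Real.sqrt B2 := Real.sqrt_le_sqrt hA2le
      have e2 : Real.sqrt A1 ≤ Real.sqrt B1 := Real.sqrt_le_sqrt hA1le
      linarith
    have hA : ((d : ℝ) - 1) * (Real.sqrt A2 - Real.sqrt A1)
        ≤ (p * d - 1) * (Real.sqrt B2 - Real.sqrt B1) :=
      sqrt_pair_le_neg ((d:ℝ) - 1) (p * d - 1) A2 A1 B2 B1 hA20 hA10 hB20 hB10 heqA hnegA hdenA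
    have h4 : 0 ≤ (1 - p) * ((Real.sqrt B2 - Real.sqrt B1) + ((d:ℝ) - 1) * (Real.sqrt δ2 - Real.sqrt δ1)) :=
      mul_nonneg (by linarith) (by linarith)
    have h5 : ((d : ℝ) - 1) * (Real.sqrt A2 - Real.sqrt A1)
        ≤ ((d : ℝ) - 1) * (p * (Real.sqrt B2 - Real.sqrt B1) + (1 - p) * (Real.sqrt δ2 - Real.sqrt δ1)) := by
      linarith [hA, h4]
    have hdpos : (0 : ℝ) < (d : ℝ) - 1 := by linarith
    exact (mul_le_mul_iff_of_pos_left hdpos).mp h5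

theorem smoothed_entropy_gap_antitone_and_le
    (d : ℕ) (hd : 2 ≤ d)
    (ψ : Fin d → ℝ) (hψ0 : ∀ i, 0 ≤ ψ i) (hψ1 : ∑ i, ψ i = 1) :
    AntitoneOn (fun δ : ℝ =>
        4 * ((∑ i, Real.sqrt ((1 - δ * d) * ψ i + δ)) - 1)
          - 4 * ((∑ i, Real.sqrt ((1 - δ * d) * (if i = (⟨0, by omega⟩ : Fin d) then 1 else 0) + δ)) - 1))
      (Set.Icc 0 (1 / d)) ∧
    ∀ δ ∈ Set.Icc (0 : ℝ) (1 / d),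
      4 * ((∑ i, Real.sqrt ((1 - δ * d) * ψ i + δ)) - 1)
          - 4 * ((∑ i, Real.sqrt ((1 - δ * d) * (if i = (⟨0, by omega⟩ : Fin d) then 1 else 0) + δ)) - 1)
        ≤ 4 * ((∑ i, Real.sqrt (ψ i)) - 1) := by
  have hdR : (2 : ℝ) ≤ (d : ℝ) := by exact_mod_cast hd
  have hd0 : (0 : ℝ) < (d : ℝ) := by linarith
  have esum : ∀ δ : ℝ,
      (∑ i : Fin d, Real.sqrt ((1 - δ * d) * (if i = (⟨0, by omega⟩ : Fin d) then 1 else 0) + δ))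
        = Real.sqrt (1 - δ * d + δ) + ((d : ℝ) - 1) * Real.sqrt δ := by
    intro δ
    rw [← Finset.add_sum_erase Finset.univ _ (Finset.mem_univ (⟨0, by omega⟩ : Fin d))]
    congr 1
    · rw [if_pos rfl, mul_one]
    · rw [Finset.sum_congr rfl (fun i hi => by
        rw [if_neg (Finset.ne_of_mem_erase hi), mul_zero, zero_add]),
        Finset.sum_const, Finset.card_erase_of_mem (Finset.mem_univ _),
        Finset.card_univ, Fintype.card_fin, nsmul_eq_mul]
      congr 1
      rw [Nat.cast_sub (by omega), Nat.cast_one]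
  have hψle : ∀ i, ψ i ≤ 1 := by
    intro i
    calc ψ i ≤ ∑ j, ψ j := Finset.single_le_sum (fun j _ => hψ0 j) (Finset.mem_univ i)
    _ = 1 := hψ1
  have main : AntitoneOn (fun δ : ℝ =>
      4 * ((∑ i, Real.sqrt ((1 - δ * d) * ψ i + δ)) - 1)
        - 4 * ((∑ i, Real.sqrt ((1 - δ * d) * (if i = (⟨0, by omega⟩ : Fin d) then 1 else 0) + δ)) - 1))
      (Set.Icc 0 (1 / d)) := by
    intro δ1 hδ1 δ2 hδ2 h12
    obtain ⟨h10, h1u⟩ := hδ1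
    obtain ⟨h20, h2u⟩ := hδ2
    have h2d : δ2 * d ≤ 1 := by
      rw [div_eq_mul_inv, one_mul] at h2u
      calc δ2 * d ≤ (d : ℝ)⁻¹ * d := by
            apply mul_le_mul_of_nonneg_right h2u (le_of_lt hd0)
      _ = 1 := by field_simp
    dsimp only
    rw [esum δ1, esum δ2]
    have key : ∑ i, (Real.sqrt ((1 - δ2 * d) * ψ i + δ2) - Real.sqrt ((1 - δ1 * d) * ψ i + δ1))
        ≤ ∑ i, (ψ i * (Real.sqrt (1 - δ2 * d + δ2) - Real.sqrt (1 - δ1 * d + δ1))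
            + (1 - ψ i) * (Real.sqrt δ2 - Real.sqrt δ1)) :=
      Finset.sum_le_sum (fun i _ =>
        chord_ineq d hd (ψ i) δ1 δ2 (hψ0 i) (hψle i) h10 h12 h2d)
    rw [Finset.sum_sub_distrib] at key
    have e2 : ∑ i, (ψ i * (Real.sqrt (1 - δ2 * d + δ2) - Real.sqrt (1 - δ1 * d + δ1))
            + (1 - ψ i) * (Real.sqrt δ2 - Real.sqrt δ1))
        = (Real.sqrt (1 - δ2 * d + δ2) - Real.sqrt (1 - δ1 * d + δ1))
          + ((d : ℝ) - 1) * (Real.sqrt δ2 - Real.sqrt δ1) := by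
      rw [Finset.sum_add_distrib, ← Finset.sum_mul, ← Finset.sum_mul, hψ1,
        Finset.sum_sub_distrib, hψ1, Finset.sum_const, Finset.card_univ, Fintype.card_fin,
        nsmul_eq_mul, mul_one, one_mul]
    rw [e2] at key
    linarith [key]
  refine ⟨main, ?_⟩
  intro δ hδ
  have h0mem : (0 : ℝ) ∈ Set.Icc (0 : ℝ) (1 / d) := ⟨le_refl 0, by positivity⟩
  have h := main h0mem hδ hδ.1
  dsimp only at h
  rw [esum 0] at h
  simp only [mul_zero, zero_mul, sub_zero, one_mul, add_zero, Real.sqrt_zero, Real.sqrt_one,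
    Nat.cast_ofNat] at h
  calc 4 * ((∑ i, Real.sqrt ((1 - δ * d) * ψ i + δ)) - 1)
      - 4 * ((∑ i, Real.sqrt ((1 - δ * d) * (if i = (⟨0, by omega⟩ : Fin d) then 1 else 0) + δ)) - 1)
      ≤ 4 * ((∑ i, Real.sqrt ((1 - 0 * d) * ψ i + 0)) - 1) - 4 * ((1 + ((d:ℝ) - 1) * 0) - 1) := by
        convert h using 2
        · rfl
        · ring_nf
        · ring_nf
  _ ≤ 4 * ((∑ i, Real.sqrt (ψ i)) - 1) := by
        simp only [zero_mul, sub_zero, one_mul, add_zero]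
        ring_nf
        linarith
end
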